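/- Let Q be a compact metric space, f : Q → ℝ continuous, and S = {θ ∈ Q : g(θ) = 0} for a continuous g : Q → ℝ^d, with S nonempty. Suppose for every a ∈ f(S) there exist δ_a > 0, ν_a > 1, N_a ≥ 1 such that |f(θ) − a| ≤ N_a‖g(θ)‖^{ν_a} for all θ ∈ Q with |f(θ) − a| ≤ δ_a. Then f(S) is a finite set. -/

import Mathlib

/-- under a Łojasiewicz-type gradient inequality, the set of
    critical values `f(S)` of a continuous function on a compact metric space is
    finite, where `S = {θ : g(θ) = 0}`. -/
theorem stmt17 {Q : Type*} [MetricSpace Q] [CompactSpace Q] {d : ℕ}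
    (f : Q → ℝ) (hf : Continuous f)
    (g : Q → EuclideanSpace ℝ (Fin d)) (hg : Continuous g)
    (hS : ({θ | g θ = 0} : Set Q).Nonempty)
    (hloj : ∀ a ∈ f '' {θ | g θ = 0},
      ∃ δ > (0:ℝ), ∃ ν > (1:ℝ), ∃ Na ≥ (1:ℝ),
        ∀ θ : Q, |f θ - a| ≤ δ → |f θ - a| ≤ Na * ‖g θ‖ ^ ν) :
    (f '' {θ | g θ = 0}).Finite := by
  set S : Set Q := {θ | g θ = 0} with hSdef
  set T : Set ℝ := f '' S with hTdef
  have hSclosed : IsClosed S := isClosed_singleton.preimage hg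
  have hTc : IsCompact T := (hSclosed.isCompact).image hf
  -- key isolation: any critical value close to a equals a
  have key : ∀ a ∈ T, ∃ δ > (0:ℝ), ∀ b ∈ T, |b - a| ≤ δ → b = a := by
    intro a ha
    obtain ⟨δ, hδ, ν, hν, Na, hNa, hineq⟩ := hloj a ha
    refine ⟨δ, hδ, ?_⟩
    rintro b ⟨θ, hθ, rfl⟩ hb
    have hgθ : g θ = 0 := hθ
    have h0 : ‖g θ‖ = 0 := by simp [hgθ]
    have := hineq θ hb
    rw [h0, Real.zero_rpow (by linarith), mul_zero] at this
    have : f θ - a = 0 := abs_eq_zero.mp (le_antisymm this (abs_nonneg _))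
    linarith
  have : DiscreteTopology T := by
    rw [discreteTopology_subtype_iff]
    intro a ha
    obtain ⟨δ, hδ, hiso⟩ := key a ha
    rw [← Filter.empty_mem_iff_bot]
    have hball : Metric.ball a δ ∈ nhdsWithin a {a}ᶜ :=
      nhdsWithin_le_nhds (Metric.ball_mem_nhds a hδ)
    rw [Filter.mem_inf_principal]
    filter_upwards [self_mem_nhdsWithin, hball] with b hb hball'
    intro hbT
    exact absurd (hiso b hbT (le_of_lt (by simpa [Real.dist_eq] using hball'))) hb
  exact hTc.finite ⟨this⟩
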